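/- arXiv:2309.11300 — 11 statements merged into one kernel-verified Lean document; each statement's English description precedes it below -/
import Mathlib

section
/- In a category with pullbacks, the restriction of a global action β of a monoid M on Y along a monomorphism ι: X → Y is a partial action of M on X. -/
open CategoryTheory CategoryTheory.Limits

/-- in a category with pullbacks, the restriction of a global action `β`
of a monoid `M` on `Y` along a monomorphism `ι : X → Y` is a partial action of `M` on `X`.
Here `dom α_m := pullback (ι ≫ β m) ι`, `ι_m := pullback.fst`, `α_m := pullback.snd`,
and `α_m⁻¹(dom α_n) := pullback α_m ι_n`. -/
theorem stmt5 {C : Type*} [Category C] [HasPullbacks C] {M : Type*} [Monoid M]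
    (X Y : C) (β : M → (Y ⟶ Y)) (hβe : β 1 = 𝟙 Y) (hβ : ∀ m n : M, β m ≫ β n = β (n * m))
    (ι : X ⟶ Y) [Mono ι] :
    -- (CPA1): α(e) = [X, id_X, id_X]
    (∃ φ : pullback (ι ≫ β 1) ι ≅ X,
      φ.hom = pullback.fst (ι ≫ β 1) ι ∧ φ.hom = pullback.snd (ι ≫ β 1) ι) ∧
    -- (CPA2)
    (∀ m n : M,
      ∃ φ : pullback (pullback.snd (ι ≫ β m) ι) (pullback.fst (ι ≫ β n) ι) ⟶
          pullback (ι ≫ β (n * m)) ι,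
        φ ≫ pullback.fst (ι ≫ β (n * m)) ι =
          pullback.fst (pullback.snd (ι ≫ β m) ι) (pullback.fst (ι ≫ β n) ι) ≫
            pullback.fst (ι ≫ β m) ι ∧
        φ ≫ pullback.snd (ι ≫ β (n * m)) ι =
          pullback.snd (pullback.snd (ι ≫ β m) ι) (pullback.fst (ι ≫ β n) ι) ≫
            pullback.snd (ι ≫ β n) ι) := by
  constructor
  · have hι : ι ≫ β 1 = ι := by rw [hβe, Category.comp_id]
    have hfs : pullback.fst (ι ≫ β 1) ι = pullback.snd (ι ≫ β 1) ι := by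
      apply (cancel_mono ι).mp
      calc pullback.fst (ι ≫ β 1) ι ≫ ι = pullback.fst (ι ≫ β 1) ι ≫ ι ≫ β 1 := (whisker_eq _ hι).symm
        _ = pullback.snd (ι ≫ β 1) ι ≫ ι := pullback.condition
    refine ⟨⟨pullback.fst (ι ≫ β 1) ι, pullback.lift (𝟙 X) (𝟙 X) (by simp [hι]), ?_, ?_⟩, rfl, hfs⟩
    · apply pullback.hom_ext
      · simp only [Category.assoc, pullback.lift_fst, Category.comp_id, Category.id_comp]
      · simp only [Category.assoc, pullback.lift_snd, Category.comp_id, Category.id_comp]; exact hfs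
    · exact pullback.lift_fst _ _ _
  · intro m n
    have key : (pullback.fst (pullback.snd (ι ≫ β m) ι) (pullback.fst (ι ≫ β n) ι) ≫
        pullback.fst (ι ≫ β m) ι) ≫ ι ≫ β (n * m) =
        (pullback.snd (pullback.snd (ι ≫ β m) ι) (pullback.fst (ι ≫ β n) ι) ≫
        pullback.snd (ι ≫ β n) ι) ≫ ι := by
      rw [← hβ m n]
      have h1 := pullback.condition (f := ι ≫ β m) (g := ι)
      have h2 := pullback.condition (f := ι ≫ β n) (g := ι)
      have h3 := pullback.condition (f := pullback.snd (ι ≫ β m) ι)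
        (g := pullback.fst (ι ≫ β n) ι)
      calc _ = pullback.fst _ _ ≫ (pullback.fst (ι ≫ β m) ι ≫ ι ≫ β m) ≫ β n := by
              simp only [Category.assoc]
        _ = pullback.fst _ _ ≫ (pullback.snd (ι ≫ β m) ι ≫ ι) ≫ β n := by rw [h1]
        _ = (pullback.fst _ _ ≫ pullback.snd (ι ≫ β m) ι) ≫ ι ≫ β n := by
              simp only [Category.assoc]
        _ = (pullback.snd _ _ ≫ pullback.fst (ι ≫ β n) ι) ≫ ι ≫ β n := by rw [h3]
        _ = pullback.snd _ _ ≫ pullback.fst (ι ≫ β n) ι ≫ ι ≫ β n := by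
              simp only [Category.assoc]
        _ = _ := by rw [h2]; simp only [Category.assoc]
    exact ⟨pullback.lift _ _ key, pullback.lift_fst _ _ _, pullback.lift_snd _ _ _⟩
end

section
/- In a category with pullbacks, the restriction of a global action along a monomorphism is a strong partial action: for all m,n ∈ M there is an isomorphism θ: α_m⁻¹(dom α_n) → dom α_m ∩ dom α_{nm} commuting with the legs of the associated spans into X. -/
open CategoryTheory CategoryTheory.Limits

/-- in a category with pullbacks, the restriction along a monomorphism
`ι : X → Y` of a global action `β` of `M` on `Y` is a *strong* partial action:
for all `m, n` there is an isomorphism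
`θ : α_m⁻¹(dom α_n) ≅ dom α_m ∩ dom α_{nm}` commuting with the legs into `X`.
Here `dom α_m := pullback (ι ≫ β m) ι` with legs `ι_m = pullback.fst`,
`α_m = pullback.snd`; `α_m⁻¹(dom α_n) := pullback α_m ι_n`;
`dom α_m ∩ dom α_{nm} := pullback ι_m ι_{nm}`. -/
theorem stmt6 {C : Type*} [Category C] [HasPullbacks C] {M : Type*} [Monoid M]
    (X Y : C) (β : M → (Y ⟶ Y)) (hβe : β 1 = 𝟙 Y) (hβ : ∀ m n : M, β m ≫ β n = β (n * m))
    (ι : X ⟶ Y) [Mono ι] :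
    ∀ m n : M,
      ∃ θ : pullback (pullback.snd (ι ≫ β m) ι) (pullback.fst (ι ≫ β n) ι) ≅
          pullback (pullback.fst (ι ≫ β m) ι) (pullback.fst (ι ≫ β (n * m)) ι),
        -- ι_{nm} ∘ ῑ^{nm}_m ∘ θ = ι_m ∘ ι̂ⁿ_m
        θ.hom ≫ pullback.snd (pullback.fst (ι ≫ β m) ι) (pullback.fst (ι ≫ β (n * m)) ι) ≫
            pullback.fst (ι ≫ β (n * m)) ι =
          pullback.fst (pullback.snd (ι ≫ β m) ι) (pullback.fst (ι ≫ β n) ι) ≫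
            pullback.fst (ι ≫ β m) ι ∧
        -- α_{nm} ∘ ῑ^{nm}_m ∘ θ = α_n ∘ α̂ⁿ_m
        θ.hom ≫ pullback.snd (pullback.fst (ι ≫ β m) ι) (pullback.fst (ι ≫ β (n * m)) ι) ≫
            pullback.snd (ι ≫ β (n * m)) ι =
          pullback.snd (pullback.snd (ι ≫ β m) ι) (pullback.fst (ι ≫ β n) ι) ≫
            pullback.snd (ι ≫ β n) ι := by
  intro m n
  have key : (ι ≫ β m) ≫ β n = ι ≫ β (n * m) := by rw [Category.assoc, hβ]
  -- condition for the D_{nm} lift from P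
  have cond1 :
      (pullback.fst (pullback.snd (ι ≫ β m) ι) (pullback.fst (ι ≫ β n) ι) ≫
          pullback.fst (ι ≫ β m) ι) ≫ (ι ≫ β (n * m)) =
      (pullback.snd (pullback.snd (ι ≫ β m) ι) (pullback.fst (ι ≫ β n) ι) ≫
          pullback.snd (ι ≫ β n) ι) ≫ ι := by
    rw [← key]
    calc (pullback.fst (pullback.snd (ι ≫ β m) ι) (pullback.fst (ι ≫ β n) ι) ≫
            pullback.fst (ι ≫ β m) ι) ≫ (ι ≫ β m) ≫ β n
        = pullback.fst (pullback.snd (ι ≫ β m) ι) (pullback.fst (ι ≫ β n) ι) ≫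
            (pullback.fst (ι ≫ β m) ι ≫ (ι ≫ β m)) ≫ β n := by simp
      _ = pullback.fst (pullback.snd (ι ≫ β m) ι) (pullback.fst (ι ≫ β n) ι) ≫
            (pullback.snd (ι ≫ β m) ι ≫ ι) ≫ β n := by rw [pullback.condition]
      _ = (pullback.fst (pullback.snd (ι ≫ β m) ι) (pullback.fst (ι ≫ β n) ι) ≫
            pullback.snd (ι ≫ β m) ι) ≫ ι ≫ β n := by simp
      _ = (pullback.snd (pullback.snd (ι ≫ β m) ι) (pullback.fst (ι ≫ β n) ι) ≫
            pullback.fst (ι ≫ β n) ι) ≫ ι ≫ β n := by rw [pullback.condition]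
      _ = pullback.snd (pullback.snd (ι ≫ β m) ι) (pullback.fst (ι ≫ β n) ι) ≫
            pullback.fst (ι ≫ β n) ι ≫ (ι ≫ β n) := by simp
      _ = pullback.snd (pullback.snd (ι ≫ β m) ι) (pullback.fst (ι ≫ β n) ι) ≫
            pullback.snd (ι ≫ β n) ι ≫ ι := by rw [pullback.condition]
      _ = _ := by simp
  -- condition for the D_n lift from Q
  have cond2 :
      (pullback.fst (pullback.fst (ι ≫ β m) ι) (pullback.fst (ι ≫ β (n * m)) ι) ≫
          pullback.snd (ι ≫ β m) ι) ≫ (ι ≫ β n) =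
      (pullback.snd (pullback.fst (ι ≫ β m) ι) (pullback.fst (ι ≫ β (n * m)) ι) ≫
          pullback.snd (ι ≫ β (n * m)) ι) ≫ ι := by
    calc (pullback.fst (pullback.fst (ι ≫ β m) ι) (pullback.fst (ι ≫ β (n * m)) ι) ≫
            pullback.snd (ι ≫ β m) ι) ≫ (ι ≫ β n)
        = pullback.fst (pullback.fst (ι ≫ β m) ι) (pullback.fst (ι ≫ β (n * m)) ι) ≫
            (pullback.snd (ι ≫ β m) ι ≫ ι) ≫ β n := by simp
      _ = pullback.fst (pullback.fst (ι ≫ β m) ι) (pullback.fst (ι ≫ β (n * m)) ι) ≫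
            (pullback.fst (ι ≫ β m) ι ≫ (ι ≫ β m)) ≫ β n := by rw [pullback.condition]
      _ = (pullback.fst (pullback.fst (ι ≫ β m) ι) (pullback.fst (ι ≫ β (n * m)) ι) ≫
            pullback.fst (ι ≫ β m) ι) ≫ (ι ≫ β m) ≫ β n := by simp
      _ = (pullback.snd (pullback.fst (ι ≫ β m) ι) (pullback.fst (ι ≫ β (n * m)) ι) ≫
            pullback.fst (ι ≫ β (n * m)) ι) ≫ (ι ≫ β (n * m)) := by
            rw [pullback.condition, key]
      _ = pullback.snd (pullback.fst (ι ≫ β m) ι) (pullback.fst (ι ≫ β (n * m)) ι) ≫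
            pullback.fst (ι ≫ β (n * m)) ι ≫ (ι ≫ β (n * m)) := by simp
      _ = pullback.snd (pullback.fst (ι ≫ β m) ι) (pullback.fst (ι ≫ β (n * m)) ι) ≫
            pullback.snd (ι ≫ β (n * m)) ι ≫ ι := by rw [pullback.condition]
      _ = _ := by simp
  refine ⟨⟨pullback.lift
      (pullback.fst (pullback.snd (ι ≫ β m) ι) (pullback.fst (ι ≫ β n) ι))
      (pullback.lift
        (pullback.fst (pullback.snd (ι ≫ β m) ι) (pullback.fst (ι ≫ β n) ι) ≫ pullback.fst (ι ≫ β m) ι)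
        (pullback.snd (pullback.snd (ι ≫ β m) ι) (pullback.fst (ι ≫ β n) ι) ≫ pullback.snd (ι ≫ β n) ι) cond1)
      (by simp [pullback.lift_fst, pullback.lift_snd, pullback.lift_fst_assoc, pullback.lift_snd_assoc]),
    pullback.lift
      (pullback.fst (pullback.fst (ι ≫ β m) ι) (pullback.fst (ι ≫ β (n * m)) ι))
      (pullback.lift
        (pullback.fst (pullback.fst (ι ≫ β m) ι) (pullback.fst (ι ≫ β (n * m)) ι) ≫ pullback.snd (ι ≫ β m) ι)
        (pullback.snd (pullback.fst (ι ≫ β m) ι) (pullback.fst (ι ≫ β (n * m)) ι) ≫ pullback.snd (ι ≫ β (n * m)) ι) cond2)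
      (by simp [pullback.lift_fst, pullback.lift_snd, pullback.lift_fst_assoc, pullback.lift_snd_assoc]),
    ?_, ?_⟩, by simp [pullback.lift_fst, pullback.lift_snd, pullback.lift_fst_assoc, pullback.lift_snd_assoc], by simp [pullback.lift_fst, pullback.lift_snd, pullback.lift_fst_assoc, pullback.lift_snd_assoc]⟩
  · apply pullback.hom_ext
    · simp [pullback.lift_fst, pullback.lift_snd, pullback.lift_fst_assoc, pullback.lift_snd_assoc]
    · apply pullback.hom_ext
      · simp [pullback.condition, pullback.lift_fst, pullback.lift_snd, pullback.lift_fst_assoc, pullback.lift_snd_assoc]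
      · simp [pullback.lift_fst, pullback.lift_snd, pullback.lift_fst_assoc, pullback.lift_snd_assoc]
  · apply pullback.hom_ext
    · simp [pullback.lift_fst, pullback.lift_snd, pullback.lift_fst_assoc, pullback.lift_snd_assoc]
    · apply pullback.hom_ext
      · simp [pullback.condition, pullback.lift_fst, pullback.lift_snd, pullback.lift_fst_assoc, pullback.lift_snd_assoc]
      · simp [pullback.lift_fst, pullback.lift_snd, pullback.lift_fst_assoc, pullback.lift_snd_assoc]
end

section
/- Let M = (ℤ, +) act partially on X = ℤ by dom α_z = ℤ for z ≥ 0 and dom α_z = {x ∈ ℤ : x ≥ −z} for z < 0, with α_z(x) = x + z. Then α is a partial action of M on X but is not strong. -/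
/-- the additive monoid `(ℤ, +)` acts partially on `ℤ` by
`dom α_z = ℤ` for `z ≥ 0`, `dom α_z = {x : x ≥ -z}` for `z < 0`, `α_z(x) = x + z`;
this is a partial action which is not strong. -/
theorem stmt8 :
    let D : ℤ → Set ℤ := fun z => {x : ℤ | 0 ≤ z ∨ -z ≤ x}
    let a : ℤ → ℤ → ℤ := fun z x => x + z
    -- (PA1)
    (D 0 = Set.univ) ∧ (∀ x : ℤ, a 0 x = x) ∧
    -- (PA2)
    (∀ m n : ℤ, ∀ x ∈ D m, a m x ∈ D n → x ∈ D (n + m)) ∧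
    -- (PA3)
    (∀ m n : ℤ, ∀ x ∈ D m, a m x ∈ D n → a n (a m x) = a (n + m) x) ∧
    -- not strong: (PA2') fails
    ¬ (∀ m n : ℤ, {x : ℤ | x ∈ D m ∧ a m x ∈ D n} = D (n + m) ∩ D m) := by
  intro D a
  refine ⟨?_, ?_, ?_, ?_, ?_⟩
  · ext x; simp [D]
  · intro x; simp [a]
  · intro m n x hx hax; simp only [D, Set.mem_setOf_eq, a] at *; omega
  · intro m n x hx hax; simp only [a]; ring
  · intro h
    have := h 1 (-1)
    have hmem : (-1 : ℤ) ∈ D (-1 + 1) ∩ D 1 := by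
      constructor <;> simp [D]
    rw [← this] at hmem
    simp only [D, a, Set.mem_setOf_eq] at hmem
    omega
end

section
/- Let α be a partial action datum of M on X in a category with pullbacks, and suppose ι: α → β is a reflection of α in the subcategory of global actions, with β acting on Y. Then (β, ι) is a globalization of α if and only if α has some globalization, if and only if for each m ∈ M the commutative square with legs ι_m, α_m (from dom α_m to X) and β_m∘ι, ι (from X to Y) is a pullback in C. -/
open CategoryTheory CategoryTheory.Limits

/-- let `α(m) = [D m, ι m, a m]` be a partial action datum of `M` on `X`
in a category with pullbacks, and let `ι₀ : α → β` be a reflection of `α` in the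
subcategory of global actions, `β` acting on `Y`. Then `(β, ι₀)` is a globalization of
`α` iff `α` has some globalization, iff each square with legs `ι_m, α_m` and
`β_m ∘ ι₀, ι₀` is a pullback. -/
theorem stmt9 {C : Type*} [Category C] [HasPullbacks C] {M : Type*} [Monoid M]
    (X : C) (D : M → C) (ι : ∀ m : M, D m ⟶ X) (hmono : ∀ m, Mono (ι m))
    (a : ∀ m : M, D m ⟶ X)
    (Y : C) (β : M → (Y ⟶ Y)) (hβe : β 1 = 𝟙 Y) (hβ : ∀ m n : M, β m ≫ β n = β (n * m))
    (ι₀ : X ⟶ Y)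
    -- ι₀ is a datum morphism from α to β
    (hdat : ∀ m : M, ι m ≫ ι₀ ≫ β m = a m ≫ ι₀)
    -- ι₀ is a reflection of α in act(C)
    (hrefl : ∀ (Z : C) (γ : M → (Z ⟶ Z)), γ 1 = 𝟙 Z → (∀ m n : M, γ m ≫ γ n = γ (n * m)) →
      ∀ f : X ⟶ Z, (∀ m : M, ι m ≫ f ≫ γ m = a m ≫ f) →
        ∃! f' : Y ⟶ Z, (∀ m : M, β m ≫ f' = f' ≫ γ m) ∧ ι₀ ≫ f' = f) :
    -- (β, ι₀) is a globalization of α  ↔  α has a globalization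
    -- (and being a globalization is exactly the pullback condition (v))
    ((Mono ι₀ ∧ ∀ m : M, IsPullback (ι m) (a m) (ι₀ ≫ β m) ι₀) ↔
      ∃ (Z : C) (γ : M → (Z ⟶ Z)) (κ : X ⟶ Z),
        γ 1 = 𝟙 Z ∧ (∀ m n : M, γ m ≫ γ n = γ (n * m)) ∧ Mono κ ∧
        ∀ m : M, IsPullback (ι m) (a m) (κ ≫ γ m) κ) := by
  constructor
  · rintro ⟨hm, hp⟩
    exact ⟨Y, β, ι₀, hβe, hβ, hm, hp⟩
  · rintro ⟨Z, γ, κ, hγe, hγ, hκ, hpb⟩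
    have hκdat : ∀ m : M, ι m ≫ κ ≫ γ m = a m ≫ κ := fun m => (hpb m).w
    obtain ⟨f', ⟨hfγ, hfι⟩, -⟩ := hrefl Z γ hγe hγ κ hκdat
    have hmι₀ : Mono ι₀ := by
      have : Mono (ι₀ ≫ f') := hfι ▸ hκ
      exact mono_of_mono ι₀ f'
    refine ⟨hmι₀, fun m => ?_⟩
    have comm : ι m ≫ (ι₀ ≫ β m) = a m ≫ ι₀ := hdat m
    refine IsPullback.of_isLimit' ⟨comm⟩ (PullbackCone.IsLimit.mk _ ?_ ?_ ?_ ?_)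
    · intro s
      refine (hpb m).lift s.fst s.snd ?_
      have := s.condition
      calc s.fst ≫ κ ≫ γ m = s.fst ≫ (ι₀ ≫ β m) ≫ f' := by
            rw [← hfι]
            simp only [Category.assoc]
            rw [hfγ m]
        _ = (s.snd ≫ ι₀) ≫ f' := by rw [← Category.assoc, this]
        _ = s.snd ≫ κ := by rw [Category.assoc, hfι]
    · intro s; exact (hpb m).lift_fst _ _ _
    · intro s; exact (hpb m).lift_snd _ _ _
    · intro s t h1 h2
      refine (hpb m).hom_ext ?_ ?_ <;>
        simp only [IsPullback.lift_fst, IsPullback.lift_snd, h1, h2]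
end

section
/- If η: F → Δ(Y) is a colimit cocone of the functor F associated to a partial action datum α, then the morphisms β_m: Y → Y induced by the translated cocones η^m define a global action β of M on Y: β_e = id_Y and β_n ∘ β_m = β_{nm} for all m,n ∈ M. -/
open CategoryTheory

/-- if `η : F → Δ(Y)` is a colimit cocone of the functor `F` associated
to a partial action datum `α` (encoded by the families `ηP, ηM` with the cocone
equations and the colimit universal property), then the morphisms `β_m : Y → Y`
induced by the translated cocones `η^m` form a global action of `M` on `Y`:
`β_e = id_Y` and `β_n ∘ β_m = β_{nm}`. -/
theorem stmt12 {C : Type*} [Category C] {M : Type*} [Monoid M]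
    (X : C) (D : M → C) (ι : ∀ m : M, D m ⟶ X) (a : ∀ m : M, D m ⟶ X)
    (Y : C) (ηP : ∀ p : M × M, (D p.2 ⟶ Y)) (ηM : M → (X ⟶ Y))
    -- η is a cocone on F
    (h1 : ∀ s t : M, ηP (s, t) = ι t ≫ ηM (s * t))
    (h2 : ∀ s t : M, ηP (s, t) = a t ≫ ηM s)
    -- η is a colimit cocone
    (hcolim : ∀ (Z : C) (ξP : ∀ p : M × M, (D p.2 ⟶ Z)) (ξM : M → (X ⟶ Z)),
      (∀ s t : M, ξP (s, t) = ι t ≫ ξM (s * t)) →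
      (∀ s t : M, ξP (s, t) = a t ≫ ξM s) →
      ∃! u : Y ⟶ Z, (∀ p : M × M, ξP p = ηP p ≫ u) ∧ (∀ s : M, ξM s = ηM s ≫ u))
    -- β_m is the morphism induced by the translated cocone η^m
    (β : M → (Y ⟶ Y))
    (hβ : ∀ m : M, (∀ p : M × M, ηP (m * p.1, p.2) = ηP p ≫ β m) ∧
      (∀ s : M, ηM (m * s) = ηM s ≫ β m)) :
    β 1 = 𝟙 Y ∧ ∀ m n : M, β m ≫ β n = β (n * m) := by
  constructor
  · obtain ⟨u, -, huniq⟩ := hcolim Y ηP ηM h1 h2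
    have e1 : β 1 = u := huniq _ ⟨fun p => by
      have h := (hβ 1).1 p; rwa [one_mul] at h, fun s => by
      have h := (hβ 1).2 s; rwa [one_mul] at h⟩
    have e2 : 𝟙 Y = u := huniq _ ⟨fun p => by simp, fun s => by simp⟩
    rw [e1, ← e2]
  · intro m n
    obtain ⟨u, -, huniq⟩ := hcolim Y (fun p => ηP (n * m * p.1, p.2))
      (fun s => ηM (n * m * s))
      (fun s t => by simpa [mul_assoc] using h1 (n * m * s) t)
      (fun s t => h2 (n * m * s) t)
    have e1 : β m ≫ β n = u := huniq _ ⟨fun p => by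
        rw [mul_assoc, (hβ n).1 (m * p.1, p.2), (hβ m).1 p, Category.assoc],
      fun s => by rw [mul_assoc, (hβ n).2 (m * s), (hβ m).2 s, Category.assoc]⟩
    have e2 : β (n * m) = u := huniq _ ⟨fun p => (hβ (n * m)).1 p,
      fun s => (hβ (n * m)).2 s⟩
    rw [e1, ← e2]
end

section
/- If η: F → Δ(Y) is a colimit of the functor F associated to a partial action datum α, and β is the global action on Y associated to η, then η_e: X → Y is a reflection of α in the category of global actions: every datum morphism f from α to a global action γ factors as f = f' ∘ η_e for a unique datum morphism f': β → γ. -/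
open CategoryTheory

/-- if `η : F → Δ(Y)` is a colimit of the functor `F` associated to the
partial action datum `α(m) = [D m, ι m, a m]`, and `β` is the global action on `Y`
associated to `η`, then `η_e : X → Y` is a reflection of `α` in the category of global
actions: every datum morphism `f` from `α` to a global action `γ` factors uniquely
through `η_e` by a datum morphism `f' : β → γ`. -/
theorem stmt13 {C : Type*} [Category C] {M : Type*} [Monoid M]
    (X : C) (D : M → C) (ι : ∀ m : M, D m ⟶ X) (a : ∀ m : M, D m ⟶ X)
    (Y : C) (ηP : ∀ p : M × M, (D p.2 ⟶ Y)) (ηM : M → (X ⟶ Y))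
    (h1 : ∀ s t : M, ηP (s, t) = ι t ≫ ηM (s * t))
    (h2 : ∀ s t : M, ηP (s, t) = a t ≫ ηM s)
    (hcolim : ∀ (Z : C) (ξP : ∀ p : M × M, (D p.2 ⟶ Z)) (ξM : M → (X ⟶ Z)),
      (∀ s t : M, ξP (s, t) = ι t ≫ ξM (s * t)) →
      (∀ s t : M, ξP (s, t) = a t ≫ ξM s) →
      ∃! u : Y ⟶ Z, (∀ p : M × M, ξP p = ηP p ≫ u) ∧ (∀ s : M, ξM s = ηM s ≫ u))
    (β : M → (Y ⟶ Y))
    (hβ : ∀ m : M, (∀ p : M × M, ηP (m * p.1, p.2) = ηP p ≫ β m) ∧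
      (∀ s : M, ηM (m * s) = ηM s ≫ β m)) :
    ∀ (Z : C) (γ : M → (Z ⟶ Z)), γ 1 = 𝟙 Z → (∀ m n : M, γ m ≫ γ n = γ (n * m)) →
      ∀ f : X ⟶ Z, (∀ m : M, ι m ≫ f ≫ γ m = a m ≫ f) →
        ∃! f' : Y ⟶ Z, (∀ m : M, β m ≫ f' = f' ≫ γ m) ∧ ηM 1 ≫ f' = f := by
  intro Z γ hγ1 hγmul f hf
  -- the cocone built from f
  set ξP : ∀ p : M × M, (D p.2 ⟶ Z) := fun p => ι p.2 ≫ f ≫ γ (p.1 * p.2) with hξP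
  set ξM : M → (X ⟶ Z) := fun s => f ≫ γ s with hξM
  have key : ∀ s t : M, a t ≫ f ≫ γ s = ι t ≫ f ≫ γ (s * t) := by
    intro s t
    have := hf t
    calc a t ≫ f ≫ γ s = (a t ≫ f) ≫ γ s := by simp
      _ = (ι t ≫ f ≫ γ t) ≫ γ s := by rw [hf t]
      _ = ι t ≫ f ≫ (γ t ≫ γ s) := by simp
      _ = ι t ≫ f ≫ γ (s * t) := by rw [hγmul]
  have hc1 : ∀ s t : M, ξP (s, t) = ι t ≫ ξM (s * t) := by intro s t; simp [hξP, hξM]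
  have hc2 : ∀ s t : M, ξP (s, t) = a t ≫ ξM s := by
    intro s t; simp only [hξP, hξM]; rw [key]
  obtain ⟨u, ⟨huP, huM⟩, huniq⟩ := hcolim Z ξP ξM hc1 hc2
  refine ⟨u, ⟨?_, ?_⟩, ?_⟩
  · -- β m ≫ u = u ≫ γ m, by uniqueness for the shifted cocone
    intro m
    obtain ⟨v, _, hvuniq⟩ := hcolim Z (fun p => ξP (m * p.1, p.2)) (fun s => ξM (m * s))
      (by intro s t; simpa [mul_assoc] using hc1 (m * s) t)
      (by intro s t; exact hc2 (m * s) t)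
    have e1 : β m ≫ u = v := by
      apply hvuniq
      constructor
      · intro p
        have := (hβ m).1 p
        rw [huP (m * p.1, p.2), this, Category.assoc]
      · intro s
        rw [huM (m * s), (hβ m).2 s, Category.assoc]
    have e2 : u ≫ γ m = v := by
      apply hvuniq
      constructor
      · intro p
        rw [← Category.assoc, ← huP p]
        simp only [hξP]
        simp only [Category.assoc]
        rw [hγmul (p.1 * p.2) m, ← mul_assoc]
      · intro s
        rw [← Category.assoc, ← huM s]
        simp only [hξM]
        rw [Category.assoc, hγmul]
    rw [e1, e2]
  · rw [← huM 1]; simp [hξM, hγ1]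
  · intro g ⟨hg1, hg2⟩
    apply huniq
    constructor
    · intro p
      rw [h2 p.1 p.2, Category.assoc]
      have : ηM p.1 ≫ g = f ≫ γ p.1 := by
        have h := (hβ p.1).2 1
        rw [mul_one] at h
        rw [h, Category.assoc, hg1, ← Category.assoc, hg2]
      rw [this, hc2 p.1 p.2]
    · intro s
      have h := (hβ s).2 1
      rw [mul_one] at h
      rw [h, Category.assoc, hg1, ← Category.assoc, hg2]
end

section
/- Given global actions ψ (on the coproduct ∐_{m∈M} X with ψ_m induced by s ↦ ms on indices) and γ on Z, the map H(f) = ∐_{m∈M}(γ_m ∘ f) is a bijection from Hom_C(X, Z) to the set of datum morphisms from ψ to γ, with inverse Γ ↦ Γ ∘ u_e. -/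
open CategoryTheory CategoryTheory.Limits

/-- given the global action `ψ` on the coproduct `∐_{m∈M} X`
(`ψ_m` induced by `s ↦ ms` on indices) and a global action `γ` on `Z`, the map
`H(f) = ∐_{m∈M} (γ_m ∘ f)` is a bijection from `Hom(X, Z)` onto the set of datum
morphisms from `ψ` to `γ`, with inverse `Γ ↦ Γ ∘ u_e`. -/
theorem stmt15 {C : Type*} [Category C] {M : Type*} [Monoid M]
    (X Z : C) [HasCoproduct (fun _ : M => X)]
    (γ : M → (Z ⟶ Z)) (hγe : γ 1 = 𝟙 Z) (hγ : ∀ m n : M, γ m ≫ γ n = γ (n * m)) :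
    let ψ : M → ((∐ fun _ : M => X) ⟶ (∐ fun _ : M => X)) :=
      fun m => Sigma.desc fun s => Sigma.ι (fun _ : M => X) (m * s)
    let H : (X ⟶ Z) → ((∐ fun _ : M => X) ⟶ Z) :=
      fun f => Sigma.desc fun s => f ≫ γ s
    -- H lands in datum morphisms ψ → γ
    (∀ f : X ⟶ Z, ∀ m : M, ψ m ≫ H f = H f ≫ γ m) ∧
    -- Γ ↦ Γ ∘ u_e is a left inverse of H
    (∀ f : X ⟶ Z, Sigma.ι (fun _ : M => X) 1 ≫ H f = f) ∧
    -- and a right inverse on datum morphisms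
    (∀ Γ : (∐ fun _ : M => X) ⟶ Z, (∀ m : M, ψ m ≫ Γ = Γ ≫ γ m) →
      H (Sigma.ι (fun _ : M => X) 1 ≫ Γ) = Γ) := by
  intro ψ H
  refine ⟨?_, ?_, ?_⟩
  · intro f m
    ext s
    simp [ψ, H, hγ]
  · intro f
    simp [H, hγe]
  · intro Γ hΓ
    ext s
    have h1 : Sigma.ι (fun _ : M => X) 1 ≫ ψ s = Sigma.ι (fun _ : M => X) s := by
      simp [ψ]
    calc Sigma.ι (fun _ : M => X) s ≫ H (Sigma.ι (fun _ : M => X) 1 ≫ Γ)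
        = Sigma.ι (fun _ : M => X) 1 ≫ Γ ≫ γ s := by simp [H]
      _ = Sigma.ι (fun _ : M => X) 1 ≫ ψ s ≫ Γ := by rw [hΓ]
      _ = Sigma.ι (fun _ : M => X) s ≫ Γ := by rw [← Category.assoc, h1]
end

section
/- Let γ be a global action of M on Z and f: X → Z. Then f is a datum morphism from the partial action datum α to γ if and only if H(f) = ∐_{m}(γ_m∘f) coequalizes the two canonical morphisms p, q: ∐_{(m,n)∈M×M} dom α_n → ∐_{m∈M} X, where p = ∐ (u_{mn} ∘ ι_n) and q = ∐ (u_m ∘ α_n). -/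
open CategoryTheory CategoryTheory.Limits

/-- let `γ` be a global action of `M` on `Z` and `f : X → Z`. Then `f`
is a datum morphism from the partial action datum `α(m) = [D m, ι m, a m]` to `γ` iff
`H(f) = ∐_m (γ_m ∘ f)` coequalizes the canonical morphisms
`p = ∐ (u_{mn} ∘ ι_n)` and `q = ∐ (u_m ∘ α_n)`. -/
theorem stmt16 {C : Type*} [Category C] {M : Type*} [Monoid M]
    (X Z : C) (D : M → C) (ι : ∀ m : M, D m ⟶ X) (hmono : ∀ m, Mono (ι m))
    (a : ∀ m : M, D m ⟶ X)
    [HasCoproduct (fun _ : M => X)] [HasCoproduct (fun pr : M × M => D pr.2)]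
    (γ : M → (Z ⟶ Z)) (hγe : γ 1 = 𝟙 Z) (hγ : ∀ m n : M, γ m ≫ γ n = γ (n * m))
    (f : X ⟶ Z) :
    let u : M → (X ⟶ ∐ fun _ : M => X) := fun m => Sigma.ι (fun _ : M => X) m
    let p : (∐ fun pr : M × M => D pr.2) ⟶ (∐ fun _ : M => X) :=
      Sigma.desc fun pr => ι pr.2 ≫ u (pr.1 * pr.2)
    let q : (∐ fun pr : M × M => D pr.2) ⟶ (∐ fun _ : M => X) :=
      Sigma.desc fun pr => a pr.2 ≫ u pr.1
    let H : (X ⟶ Z) → ((∐ fun _ : M => X) ⟶ Z) :=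
      fun g => Sigma.desc fun s => g ≫ γ s
    (∀ m : M, ι m ≫ f ≫ γ m = a m ≫ f) ↔ p ≫ H f = q ≫ H f := by
  intro u p q H
  constructor
  · intro h
    ext pr
    simp only [p, q, H, u, colimit.ι_desc_assoc, Cofan.mk_pt, Cofan.mk_ι_app,
      Category.assoc, colimit.ι_desc]
    rw [← hγ pr.2 pr.1, ← reassoc_of% (h pr.2)]
  · intro h m
    have := congrArg (fun g => Sigma.ι (fun pr : M × M => D pr.2) ((1 : M), m) ≫ g) h
    simpa [p, q, H, u, hγe] using this
end

section
/- A partial action datum α of a monoid M on X has a reflection in the category of global actions if and only if the pair of parallel morphisms p, q: ∐_{(m,n)} dom α_n → ∐_m X (viewed as morphisms between the induced global actions φ and ψ) has a coequalizer in the category of global actions. Moreover, if r: α → β is a reflection then H(r) = ∐_m(β_m∘r) is a coequalizer of p and q, and conversely if c: ψ → β is a coequalizer then c ∘ u_e is a reflection of α. -/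
open CategoryTheory CategoryTheory.Limits

/-- a partial action datum `α(m) = [D m, ι m, a m]` of `M` on `X` has a
reflection in the category of global actions iff the parallel pair `p, q` (between the
global actions `φ, ψ` on the coproducts) has a coequalizer in the category of global
actions. Moreover, if `r : α → β` is a reflection then `H(r) = ∐_m (β_m ∘ r)` is a
coequalizer of `p` and `q` in `act(C)`, and conversely if `c : ψ → β` is a coequalizer
of `p` and `q` in `act(C)` then `u_e ≫ c` is a reflection of `α`. -/
theorem stmt17 {C : Type*} [Category C] {M : Type*} [Monoid M]
    (X : C) (D : M → C) (ι : ∀ m : M, D m ⟶ X) (hmono : ∀ m, Mono (ι m))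
    (a : ∀ m : M, D m ⟶ X)
    [HasCoproduct (fun _ : M => X)] [HasCoproduct (fun pr : M × M => D pr.2)] :
    let u : M → (X ⟶ ∐ fun _ : M => X) := fun m => Sigma.ι (fun _ : M => X) m
    let ψ : M → ((∐ fun _ : M => X) ⟶ (∐ fun _ : M => X)) :=
      fun m => Sigma.desc fun s => u (m * s)
    let p : (∐ fun pr : M × M => D pr.2) ⟶ (∐ fun _ : M => X) :=
      Sigma.desc fun pr => ι pr.2 ≫ u (pr.1 * pr.2)
    let q : (∐ fun pr : M × M => D pr.2) ⟶ (∐ fun _ : M => X) :=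
      Sigma.desc fun pr => a pr.2 ≫ u pr.1
    -- (1) if r : α → β is a reflection, then H(r) is a coequalizer of p, q in act(C)
    (∀ (Y : C) (β : M → (Y ⟶ Y)), β 1 = 𝟙 Y → (∀ m n : M, β m ≫ β n = β (n * m)) →
      ∀ r : X ⟶ Y, (∀ m : M, ι m ≫ r ≫ β m = a m ≫ r) →
      (∀ (Z : C) (γ : M → (Z ⟶ Z)), γ 1 = 𝟙 Z → (∀ m n : M, γ m ≫ γ n = γ (n * m)) →
        ∀ f : X ⟶ Z, (∀ m : M, ι m ≫ f ≫ γ m = a m ≫ f) →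
          ∃! f' : Y ⟶ Z, (∀ m : M, β m ≫ f' = f' ≫ γ m) ∧ r ≫ f' = f) →
      ((∀ m : M, ψ m ≫ Sigma.desc (fun s => r ≫ β s) =
          Sigma.desc (fun s => r ≫ β s) ≫ β m) ∧
       (p ≫ Sigma.desc (fun s => r ≫ β s) = q ≫ Sigma.desc (fun s => r ≫ β s)) ∧
       (∀ (Z : C) (γ : M → (Z ⟶ Z)), γ 1 = 𝟙 Z → (∀ m n : M, γ m ≫ γ n = γ (n * m)) →
         ∀ g : (∐ fun _ : M => X) ⟶ Z, (∀ m : M, ψ m ≫ g = g ≫ γ m) →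
           p ≫ g = q ≫ g →
           ∃! g' : Y ⟶ Z, (∀ m : M, β m ≫ g' = g' ≫ γ m) ∧
             Sigma.desc (fun s => r ≫ β s) ≫ g' = g))) ∧
    -- (2) if c : ψ → β is a coequalizer of p, q in act(C), then u_e ≫ c is a reflection
    (∀ (Y : C) (β : M → (Y ⟶ Y)), β 1 = 𝟙 Y → (∀ m n : M, β m ≫ β n = β (n * m)) →
      ∀ c : (∐ fun _ : M => X) ⟶ Y, (∀ m : M, ψ m ≫ c = c ≫ β m) → p ≫ c = q ≫ c →
      (∀ (Z : C) (γ : M → (Z ⟶ Z)), γ 1 = 𝟙 Z → (∀ m n : M, γ m ≫ γ n = γ (n * m)) →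
        ∀ g : (∐ fun _ : M => X) ⟶ Z, (∀ m : M, ψ m ≫ g = g ≫ γ m) → p ≫ g = q ≫ g →
          ∃! g' : Y ⟶ Z, (∀ m : M, β m ≫ g' = g' ≫ γ m) ∧ c ≫ g' = g) →
      ((∀ m : M, ι m ≫ (u 1 ≫ c) ≫ β m = a m ≫ (u 1 ≫ c)) ∧
       (∀ (Z : C) (γ : M → (Z ⟶ Z)), γ 1 = 𝟙 Z → (∀ m n : M, γ m ≫ γ n = γ (n * m)) →
         ∀ f : X ⟶ Z, (∀ m : M, ι m ≫ f ≫ γ m = a m ≫ f) →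
           ∃! f' : Y ⟶ Z, (∀ m : M, β m ≫ f' = f' ≫ γ m) ∧ (u 1 ≫ c) ≫ f' = f))) := by

  intro u ψ p q
  have hup : ∀ (T : C) (h : (∐ fun _ : M => X) ⟶ T) (s : M),
      u s ≫ h = Sigma.ι (fun _ : M => X) s ≫ h := fun _ _ _ => rfl
  constructor
  · -- (1)
    intro Y β hβ1 hβmul r hr hrefl
    have hcomp : ∀ s : M, u s ≫ Sigma.desc (fun s => r ≫ β s) = r ≫ β s := by
      intro s; simp [u]
    have hψ : ∀ m s : M, u s ≫ ψ m = u (m * s) := by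
      intro m s; simp [u, ψ]
    refine ⟨?_, ?_, ?_⟩
    · intro m
      apply Sigma.hom_ext; intro s
      show u s ≫ ψ m ≫ _ = u s ≫ _ ≫ β m
      rw [← Category.assoc, hψ, hcomp, ← Category.assoc, hcomp, Category.assoc,
        hβmul]
    · apply Sigma.hom_ext; intro pr
      obtain ⟨m, n⟩ := pr
      have h1 : Sigma.ι (fun pr : M × M => D pr.2) (m, n) ≫ p = ι n ≫ u (m * n) := by
        simp [p]
      have h2 : Sigma.ι (fun pr : M × M => D pr.2) (m, n) ≫ q = a n ≫ u m := by
        simp [q]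
      rw [← Category.assoc, ← Category.assoc, h1, h2, Category.assoc, hcomp,
        Category.assoc, hcomp]
      calc ι n ≫ r ≫ β (m * n) = ι n ≫ (r ≫ β n) ≫ β m := by
              rw [← hβmul n m]; simp [Category.assoc]
        _ = (ι n ≫ r ≫ β n) ≫ β m := by simp [Category.assoc]
        _ = (a n ≫ r) ≫ β m := by rw [hr n]
        _ = a n ≫ r ≫ β m := by simp [Category.assoc]
    · intro Z γ hγ1 hγmul g hg hpq
      have hf : ∀ m : M, ι m ≫ (u 1 ≫ g) ≫ γ m = a m ≫ (u 1 ≫ g) := by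
        intro m
        have h1 : u 1 ≫ g ≫ γ m = u m ≫ g := by
          rw [← hg m, ← Category.assoc, hψ, mul_one]
        have h2 : ι m ≫ u m ≫ g = a m ≫ u 1 ≫ g := by
          have h3 : (Sigma.ι (fun pr : M × M => D pr.2) (1, m) ≫ p) ≫ g =
              (Sigma.ι (fun pr : M × M => D pr.2) (1, m) ≫ q) ≫ g := by
            rw [Category.assoc, Category.assoc, hpq]
          simpa [p, q, u, one_mul, Category.assoc] using h3
        rw [Category.assoc, h1, h2]
      obtain ⟨f', ⟨hf'1, hf'2⟩, hf'u⟩ := hrefl Z γ hγ1 hγmul (u 1 ≫ g) hf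
      refine ⟨f', ⟨hf'1, ?_⟩, ?_⟩
      · apply Sigma.hom_ext; intro s
        show u s ≫ _ ≫ f' = u s ≫ g
        rw [← Category.assoc, hcomp, Category.assoc, hf'1, ← Category.assoc,
          hf'2, Category.assoc, ← hg, ← Category.assoc, hψ, mul_one]
      · rintro g' ⟨hg'1, hg'2⟩
        apply hf'u
        refine ⟨hg'1, ?_⟩
        have : u 1 ≫ Sigma.desc (fun s => r ≫ β s) = r := by
          rw [hcomp, hβ1, Category.comp_id]
        rw [← this, Category.assoc, hg'2]
  · -- (2)
    intro Y β hβ1 hβmul c hc hpqc hcoeq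
    have hψ : ∀ m s : M, u s ≫ ψ m = u (m * s) := by
      intro m s; simp [u, ψ]
    have huc : ∀ m : M, u 1 ≫ c ≫ β m = u m ≫ c := by
      intro m; rw [← hc m, ← Category.assoc, hψ, mul_one]
    constructor
    · intro m
      have h2 : (Sigma.ι (fun pr : M × M => D pr.2) (1, m) ≫ p) ≫ c =
          (Sigma.ι (fun pr : M × M => D pr.2) (1, m) ≫ q) ≫ c := by
        rw [Category.assoc, Category.assoc, hpqc]
      simp only [Category.assoc, huc]
      simpa [p, q, u, one_mul, Category.assoc] using h2
    · intro Z γ hγ1 hγmul f hf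
      have hgdesc : ∀ s : M, u s ≫ Sigma.desc (fun s => f ≫ γ s) = f ≫ γ s := by
        intro s; simp [u]
      have hgψ : ∀ m : M, ψ m ≫ Sigma.desc (fun s => f ≫ γ s) =
          Sigma.desc (fun s => f ≫ γ s) ≫ γ m := by
        intro m
        apply Sigma.hom_ext; intro s
        show u s ≫ ψ m ≫ _ = u s ≫ _ ≫ γ m
        rw [← Category.assoc, hψ, hgdesc, ← Category.assoc, hgdesc, Category.assoc,
          hγmul]
      have hgpq : p ≫ Sigma.desc (fun s => f ≫ γ s) =
          q ≫ Sigma.desc (fun s => f ≫ γ s) := by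
        apply Sigma.hom_ext; intro pr
        obtain ⟨m, n⟩ := pr
        have h1 : Sigma.ι (fun pr : M × M => D pr.2) (m, n) ≫ p = ι n ≫ u (m * n) := by
          simp [p]
        have h2 : Sigma.ι (fun pr : M × M => D pr.2) (m, n) ≫ q = a n ≫ u m := by
          simp [q]
        rw [← Category.assoc, ← Category.assoc, h1, h2, Category.assoc, hgdesc,
          Category.assoc, hgdesc]
        calc ι n ≫ f ≫ γ (m * n) = (ι n ≫ f ≫ γ n) ≫ γ m := by
              rw [← hγmul n m]; simp [Category.assoc]
          _ = (a n ≫ f) ≫ γ m := by rw [hf n]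
          _ = a n ≫ f ≫ γ m := by simp [Category.assoc]
      obtain ⟨g', ⟨hg'1, hg'2⟩, hg'u⟩ := hcoeq Z γ hγ1 hγmul
        (Sigma.desc (fun s => f ≫ γ s)) hgψ hgpq
      refine ⟨g', ⟨hg'1, ?_⟩, ?_⟩
      · rw [Category.assoc, hg'2, hgdesc, hγ1, Category.comp_id]
      · rintro f'' ⟨hf''1, hf''2⟩
        apply hg'u
        refine ⟨hf''1, ?_⟩
        apply Sigma.hom_ext; intro s
        show u s ≫ c ≫ f'' = u s ≫ _
        rw [hgdesc]
        calc u s ≫ c ≫ f'' = (u 1 ≫ c ≫ β s) ≫ f'' := by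
              rw [huc, Category.assoc]
          _ = u 1 ≫ c ≫ β s ≫ f'' := by simp [Category.assoc]
          _ = u 1 ≫ c ≫ f'' ≫ γ s := by rw [hf''1]
          _ = ((u 1 ≫ c) ≫ f'') ≫ γ s := by simp [Category.assoc]
          _ = f ≫ γ s := by rw [hf''2]
end

section
/- Let α be a partial action datum of a monoid M on a set X. Let ≈ be the equivalence relation on M × X generated by (m, x) ∼ (n, y) whenever there exists m' ∈ M with m = nm', x ∈ dom α_{m'} and y = α_{m'}(x). Let Y = (M × X)/≈, β_n([m,x]) = [nm, x], and ι(x) = [e, x]. Then β is a well-defined global action of M on Y and ι is a reflection of α in the category of global monoid actions on sets. -/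
/-- The relation on `M × X` generating `≈`: `(m, x) ∼ (n, y)` iff there is `m' ∈ M`
with `m = n * m'`, `x ∈ dom α_{m'}` and `y = α_{m'}(x)`. -/
def relGen {M : Type u} [Monoid M] {X : Type v} (D : M → Set X) (a : ∀ m : M, D m → X) :
    M × X → M × X → Prop :=
  fun p q => ∃ (m' : M) (h : p.2 ∈ D m'), p.1 = q.1 * m' ∧ q.2 = a m' ⟨p.2, h⟩

/-- let `α` be a partial action datum of `M` on the set `X`, `≈` the
equivalence relation on `M × X` generated by `∼`, `Y = (M × X)/≈`,
`β_n [m, x] = [nm, x]` and `ι x = [e, x]`. Then `β` is a well-defined global action of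
`M` on `Y` and `ι` is a reflection of `α` in the category of global actions on sets. -/
theorem stmt18 {M : Type u} [Monoid M] {X : Type v}
    (D : M → Set X) (a : ∀ m : M, D m → X) :
    ∃ β : M → Quot (relGen D a) → Quot (relGen D a),
      -- β is well defined by β_n [m, x] = [nm, x]
      (∀ n m : M, ∀ x : X, β n (Quot.mk _ (m, x)) = Quot.mk _ (n * m, x)) ∧
      -- β is a global action
      β 1 = id ∧ (∀ m n : M, β n ∘ β m = β (n * m)) ∧
      -- ι : x ↦ [e, x] is a datum morphism from α to β
      (∀ m : M, ∀ x : D m,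
        β m (Quot.mk _ (1, (x : X))) = Quot.mk _ (1, a m x)) ∧
      -- ι is a reflection of α in act(Set)
      (∀ (Z : Type max u v) (γ : M → Z → Z), γ 1 = id →
        (∀ m n : M, γ n ∘ γ m = γ (n * m)) →
        ∀ f : X → Z, (∀ m : M, ∀ x : D m, γ m (f x) = f (a m x)) →
          ∃! f' : Quot (relGen D a) → Z,
            (∀ m : M, f' ∘ β m = γ m ∘ f') ∧ (∀ x : X, f' (Quot.mk _ (1, x)) = f x)) := by
  refine ⟨fun n => Quot.lift (fun p => Quot.mk _ (n * p.1, p.2)) ?_, ?_, ?_, ?_, ?_, ?_⟩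
  · rintro p q ⟨m', h, h1, h2⟩
    exact Quot.sound ⟨m', h, by rw [h1, mul_assoc], h2⟩
  · intro n m x; rfl
  · funext y
    induction y using Quot.ind with
    | _ p => simp
  · intro m n; funext y
    induction y using Quot.ind with
    | _ p => simp [mul_assoc]
  · intro m x
    refine Quot.sound ⟨m, x.2, by simp, by simp⟩
  · intro Z γ hγ1 hγc f hf
    have key : ∀ p q : M × X, relGen D a p q → γ p.1 (f p.2) = γ q.1 (f q.2) := by
      rintro p q ⟨m', h, h1, h2⟩
      rw [h1, h2, ← hf m' ⟨p.2, h⟩, ← Function.comp_apply (f := γ q.1), hγc]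
    refine ⟨Quot.lift (fun p => γ p.1 (f p.2)) key, ⟨?_, ?_⟩, ?_⟩
    · intro m; funext y
      induction y using Quot.ind with
      | _ p =>
        show γ (m * p.1) (f p.2) = γ m (γ p.1 (f p.2))
        rw [← hγc, Function.comp_apply]
    · intro x
      show γ 1 (f x) = f x
      rw [hγ1]; rfl
    · rintro g ⟨hg1, hg2⟩
      funext y
      induction y using Quot.ind with
      | _ p =>
        obtain ⟨m, x⟩ := p
        have : g (Quot.mk _ (m, x)) = γ m (g (Quot.mk _ (1, x))) := by
          have := congrFun (hg1 m) (Quot.mk _ (1, x))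
          simpa using this
        rw [this, hg2]
end

section
/- A partial action datum α of a monoid M on a set X has a universal globalization if and only if α is a strong partial action of M on X. -/
universe u v

section Aux

variable {M : Type u} [Monoid M] {X : Type v}

/-- dependent congruence for the partial action maps -/
private theorem aCongr (D : M → Set X) (a : ∀ m : M, D m → X)
    {k k' : M} (h : k = k') (x : X) (hx : x ∈ D k) (hx' : x ∈ D k') :
    a k ⟨x, hx⟩ = a k' ⟨x, hx'⟩ := by subst h; rfl

/-- generating relation for the universal globalization -/
private def paRel (D : M → Set X) (a : ∀ m : M, D m → X) : M × X → M × X → Prop :=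
  fun p q => ∃ (m k : M) (x : X) (hx : x ∈ D k), p = (m * k, x) ∧ q = (m, a k ⟨x, hx⟩)

/-- the global action on the quotient -/
private def paBeta (D : M → Set X) (a : ∀ m : M, D m → X) (n : M) :
    Quot (paRel D a) → Quot (paRel D a) :=
  Quot.lift (fun p => Quot.mk (paRel D a) (n * p.1, p.2)) (by
    rintro p q ⟨m, k, x, hx, rfl, rfl⟩
    apply Quot.sound
    exact ⟨n * m, k, x, hx, by rw [mul_assoc], rfl⟩)

open Classical in
/-- invariant separating the quotient classes -/
private noncomputable def paPhi (D : M → Set X) (a : ∀ m : M, D m → X) : M × X → M → Option X :=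
  fun p s => if h : p.2 ∈ D (s * p.1) then some (a (s * p.1) ⟨p.2, h⟩) else none

open Classical in
private theorem paPhi_pos (D : M → Set X) (a : ∀ m : M, D m → X) (p : M × X) (s : M)
    (h : p.2 ∈ D (s * p.1)) : paPhi D a p s = some (a (s * p.1) ⟨p.2, h⟩) := dif_pos h

open Classical in
private theorem paPhi_neg (D : M → Set X) (a : ∀ m : M, D m → X) (p : M × X) (s : M)
    (h : p.2 ∉ D (s * p.1)) : paPhi D a p s = none := dif_neg h

end Aux

/-- a partial action datum `α` of a monoid `M` on a set `X`
(given by `D : M → Set X` and maps `a m : D m → X`) has a universal globalization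
iff `α` is a strong partial action of `M` on `X`. -/
theorem stmt19 {M : Type u} [Monoid M] {X : Type v}
    (D : M → Set X) (a : ∀ m : M, D m → X) :
    -- α has a universal globalization
    (∃ (Y : Type max u v) (β : M → Y → Y) (ι : X → Y),
      -- (β, ι) is a globalization of α
      (β 1 = id ∧ (∀ m n : M, β n ∘ β m = β (n * m)) ∧ Function.Injective ι ∧
        (∀ m : M, D m = {x : X | β m (ι x) ∈ Set.range ι}) ∧
        (∀ m : M, ∀ x : D m, ι (a m x) = β m (ι (x : X)))) ∧
      -- it is universal: every globalization factors uniquely through it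
      (∀ (Z : Type max u v) (γ : M → Z → Z) (κ : X → Z),
        γ 1 = id → (∀ m n : M, γ n ∘ γ m = γ (n * m)) → Function.Injective κ →
        (∀ m : M, D m = {x : X | γ m (κ x) ∈ Set.range κ}) →
        (∀ m : M, ∀ x : D m, κ (a m x) = γ m (κ (x : X))) →
          ∃! κ' : Y → Z, (∀ m : M, κ' ∘ β m = γ m ∘ κ') ∧ κ' ∘ ι = κ)) ↔
    -- α is a strong partial action
    (D 1 = Set.univ ∧ (∀ x : D 1, a 1 x = (x : X)) ∧
      (∀ m n : M, {x : X | ∃ h : x ∈ D m, a m ⟨x, h⟩ ∈ D n} = D (n * m) ∩ D m) ∧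
      (∀ m n : M, ∀ x : X, ∀ hm : x ∈ D m, ∀ hn : a m ⟨x, hm⟩ ∈ D n,
        ∀ hnm : x ∈ D (n * m), a n ⟨a m ⟨x, hm⟩, hn⟩ = a (n * m) ⟨x, hnm⟩)) := by
  constructor
  · -- forward: a globalization forces the strong axioms
    rintro ⟨Y, β, ι, ⟨hβ1, hβc, hιinj, hDm, heq⟩, -⟩
    have key : ∀ (m n : M) (x : X), β n (β m (ι x)) = β (n * m) (ι x) :=
      fun m n x => congrFun (hβc m n) (ι x)
    refine ⟨?_, ?_, ?_, ?_⟩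
    · ext x
      simp [hDm 1, hβ1]
    · intro x
      apply hιinj
      rw [heq 1 x, hβ1]; rfl
    · intro m n
      ext x
      simp only [Set.mem_setOf_eq, Set.mem_inter_iff]
      constructor
      · rintro ⟨hm, hn⟩
        refine ⟨?_, hm⟩
        have hn' : β n (ι (a m ⟨x, hm⟩)) ∈ Set.range ι := by
          have h' := hn; rw [hDm n] at h'; exact h'
        rw [heq m ⟨x, hm⟩, key m n x] at hn'
        rw [hDm (n * m)]; exact hn'
      · rintro ⟨hnm, hm⟩
        refine ⟨hm, ?_⟩
        have hnm' : β (n * m) (ι x) ∈ Set.range ι := by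
          have h' := hnm; rw [hDm (n * m)] at h'; exact h'
        rw [← key m n x, ← heq m ⟨x, hm⟩] at hnm'
        rw [hDm n]; exact hnm'
    · intro m n x hm hn hnm
      apply hιinj
      rw [heq n ⟨a m ⟨x, hm⟩, hn⟩, heq m ⟨x, hm⟩, key m n x, heq (n * m) ⟨x, hnm⟩]
  · -- backward: construct the universal globalization
    rintro ⟨h1, h2, h3, h4⟩
    have hD1 : ∀ x : X, x ∈ D 1 := fun x => h1 ▸ Set.mem_univ x
    -- compatibility of the invariant with the relation
    have compat : ∀ p q, paRel D a p q → paPhi D a p = paPhi D a q := by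
      rintro p q ⟨m, k, x, hx, rfl, rfl⟩
      funext s
      have hiff : x ∈ D (s * (m * k)) ↔ a k ⟨x, hx⟩ ∈ D (s * m) := by
        have h3' := h3 k (s * m)
        constructor
        · intro h
          have hx' : x ∈ D (s * m * k) ∩ D k := ⟨by rwa [mul_assoc], hx⟩
          rw [← h3'] at hx'
          obtain ⟨hk, hsm⟩ := hx'
          exact (aCongr D a (rfl : k = k) x hk hx) ▸ hsm
        · intro h
          have hx' : x ∈ {x : X | ∃ h : x ∈ D k, a k ⟨x, h⟩ ∈ D (s * m)} := ⟨hx, h⟩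
          rw [h3'] at hx'
          have := hx'.1
          rwa [← mul_assoc]
      by_cases hc : x ∈ D (s * (m * k))
      · rw [paPhi_pos D a (m * k, x) s hc, paPhi_pos D a (m, a k ⟨x, hx⟩) s (hiff.mp hc)]
        have hc' : x ∈ D (s * m * k) := by rwa [mul_assoc]
        rw [h4 k (s * m) x hx (hiff.mp hc) hc']
        exact congrArg some (aCongr D a (by rw [mul_assoc]) x hc hc')
      · rw [paPhi_neg D a (m * k, x) s hc, paPhi_neg D a (m, a k ⟨x, hx⟩) s
          (fun h => hc (hiff.mpr h))]
    have key : ∀ p q : M × X, Quot.mk (paRel D a) p = Quot.mk (paRel D a) q →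
        paPhi D a p = paPhi D a q := by
      intro p q h
      exact congrArg (Quot.lift (paPhi D a) compat) h
    -- main lemma : identification with image points
    have mkEq : ∀ (m : M) (x y : X), Quot.mk (paRel D a) (m, x) = Quot.mk (paRel D a) (1, y) →
        ∃ h : x ∈ D m, a m ⟨x, h⟩ = y := by
      intro m x y h
      have hφ := congrFun (key _ _ h) 1
      have hy1 : y ∈ D (1 * 1) := by rw [one_mul]; exact hD1 y
      have hrhs : paPhi D a (1, y) 1 = some y := by
        rw [paPhi_pos D a (1, y) 1 hy1]
        have : a (1 * 1) ⟨y, hy1⟩ = a 1 ⟨y, hD1 y⟩ := aCongr D a (one_mul 1) y hy1 (hD1 y)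
        rw [this, h2 ⟨y, hD1 y⟩]
      rw [hrhs] at hφ
      by_cases hc : x ∈ D (1 * m)
      · have hlhs : paPhi D a (m, x) 1 = some (a (1 * m) ⟨x, hc⟩) := paPhi_pos D a (m, x) 1 hc
        rw [hlhs] at hφ
        have hxm : x ∈ D m := (one_mul m) ▸ hc
        refine ⟨hxm, ?_⟩
        rw [aCongr D a (one_mul m).symm x hxm hc]
        exact Option.some_injective X hφ
      · have hlhs : paPhi D a (m, x) 1 = none := paPhi_neg D a (m, x) 1 hc
        rw [hlhs] at hφ
        exact absurd hφ (by simp)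
    -- the relation in the easy direction
    have mkRel : ∀ (m : M) (x : X) (hx : x ∈ D m),
        Quot.mk (paRel D a) (m * 1, x) = Quot.mk (paRel D a) (1, a m ⟨x, hx⟩) := by
      intro m x hx
      have : ((m * 1 : M), x) = ((1 * m : M), x) := by rw [one_mul, mul_one]
      rw [this]
      exact Quot.sound ⟨1, m, x, hx, rfl, rfl⟩
    refine ⟨Quot (paRel D a), paBeta D a, fun x => Quot.mk (paRel D a) (1, x),
      ⟨?_, ?_, ?_, ?_, ?_⟩, ?_⟩
    · -- β 1 = id
      funext y
      induction y using Quot.ind with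
      | _ p =>
        show Quot.mk (paRel D a) (1 * p.1, p.2) = Quot.mk (paRel D a) p
        rw [one_mul]
    · -- composition
      intro m n
      funext y
      induction y using Quot.ind with
      | _ p =>
        show Quot.mk (paRel D a) (n * (m * p.1), p.2) = Quot.mk (paRel D a) (n * m * p.1, p.2)
        rw [mul_assoc]
    · -- ι injective
      intro x y h
      obtain ⟨hx, hxy⟩ := mkEq 1 x y h
      rw [← hxy, h2 ⟨x, hx⟩]
    · -- domains
      intro m
      ext x
      simp only [Set.mem_setOf_eq, Set.mem_range]
      constructor
      · intro hx
        exact ⟨a m ⟨x, hx⟩, (mkRel m x hx).symm⟩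
      · rintro ⟨y, hy⟩
        have hy' : Quot.mk (paRel D a) (m, x) = Quot.mk (paRel D a) (1, y) := by
          calc Quot.mk (paRel D a) (m, x)
              = Quot.mk (paRel D a) (m * 1, x) := by rw [mul_one]
            _ = Quot.mk (paRel D a) (1, y) := hy.symm
        exact (mkEq m x y hy').1
    · -- equivariance of ι
      intro m x
      exact (mkRel m (x : X) x.2).symm
    · -- universality
      intro Z γ κ hγ1 hγc hκinj hκD hκeq
      have κcompat : ∀ p q, paRel D a p q → γ p.1 (κ p.2) = γ q.1 (κ q.2) := by
        rintro p q ⟨m, k, x, hx, rfl, rfl⟩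
        show γ (m * k) (κ x) = γ m (κ (a k ⟨x, hx⟩))
        rw [hκeq k ⟨x, hx⟩]
        exact (congrFun (hγc k m) (κ x)).symm
      refine ⟨Quot.lift (fun p => γ p.1 (κ p.2)) κcompat, ⟨?_, ?_⟩, ?_⟩
      · intro m
        funext y
        induction y using Quot.ind with
        | _ p =>
          show γ (m * p.1) (κ p.2) = γ m (γ p.1 (κ p.2))
          exact (congrFun (hγc p.1 m) (κ p.2)).symm
      · funext x
        show γ 1 (κ x) = κ x
        rw [hγ1]; rfl
      · rintro κ'' ⟨hc, hi⟩
        funext y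
        induction y using Quot.ind with
        | _ p =>
          obtain ⟨m, x⟩ := p
          have h1' : Quot.mk (paRel D a) (m, x) =
              paBeta D a m (Quot.mk (paRel D a) (1, x)) := by
            show Quot.mk (paRel D a) (m, x) = Quot.mk (paRel D a) (m * 1, x)
            rw [mul_one]
          calc κ'' (Quot.mk (paRel D a) (m, x))
              = κ'' (paBeta D a m (Quot.mk (paRel D a) (1, x))) := by rw [h1']
            _ = γ m (κ'' (Quot.mk (paRel D a) (1, x))) := congrFun (hc m) _
            _ = γ m (κ x) := congrArg (γ m) (congrFun hi x)
end
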